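/- The number of parking quasi-ribbons of length n equals the little Schröder number sₙ; in particular there are 1, 3, 11 parking quasi-ribbons of lengths 1, 2, 3. -/

import Mathlib

def IsNDPF (w : List ℕ) : Prop :=
  w.Pairwise (· ≤ ·) ∧ ∀ (i : ℕ) (h : i < w.length), 1 ≤ w[i] ∧ w[i] ≤ i + 1

def IsPQR (n : ℕ) (p : List ℕ × Finset ℕ) : Prop :=
  IsNDPF p.1 ∧ p.1.length = n ∧
    ∀ b ∈ p.2, b + 1 < n ∧ p.1.getD b 0 < p.1.getD (b + 1) 0

set_option linter.unusedSectionVars false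

def aFun : ℕ → ℕ
  | 0 => 1
  | (m+1) => aFun m + 2 * ∑ i ∈ (Finset.range m).attach, aFun i * aFun (m - i)
decreasing_by
  · exact Nat.lt_succ_self m
  · have := Finset.mem_range.mp i.2; omega
  · have := Finset.mem_range.mp i.2; omega

lemma aFun_succ (m : ℕ) : aFun (m+1) = aFun m + 2 * ∑ i ∈ Finset.range m, aFun i * aFun (m - i) := by
  rw [aFun]
  congr 1
  rw [Finset.sum_attach (Finset.range m) (fun i => aFun i * aFun (m - i))]

namespace PQRaux
lemma isPQR_iff (n : ℕ) (w : List ℕ) (B : Finset ℕ) :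
    IsPQR n (w, B) ↔ w.length = n ∧
      (∀ i k, i ≤ k → k < n → w.getD i 0 ≤ w.getD k 0) ∧
      (∀ i, i < n → 1 ≤ w.getD i 0 ∧ w.getD i 0 ≤ i + 1) ∧
      (∀ b ∈ B, b + 1 < n ∧ w.getD b 0 < w.getD (b + 1) 0) := by
  constructor
  · rintro ⟨⟨hs, hb⟩, hlen, hbar⟩
    dsimp only at hs hb hlen hbar ⊢
    have hlen' : w.length = n := hlen
    refine ⟨hlen, ?_, ?_, hbar⟩
    · intro i k hik hk
      rw [List.getD_eq_getElem w 0 (by omega), List.getD_eq_getElem w 0 (by omega)]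
      rcases eq_or_lt_of_le hik with rfl | hik
      · exact le_refl _
      · exact (List.pairwise_iff_getElem.mp hs) i k (by omega) (by omega) hik
    · intro i hi
      rw [List.getD_eq_getElem w 0 (by omega)]
      exact hb i (by omega)
  · rintro ⟨hlen, hs, hb, hbar⟩
    refine ⟨⟨List.pairwise_iff_getElem.mpr ?_, ?_⟩, hlen, hbar⟩
    all_goals dsimp only
    · intro i k hi hk hik
      have := hs i k (le_of_lt hik) (by omega)
      rwa [List.getD_eq_getElem w 0 (by omega), List.getD_eq_getElem w 0 (by omega)] at this
    · intro i hi
      have := hb i (by omega)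
      rwa [List.getD_eq_getElem w 0 (by omega)] at this

lemma bar_lt {n : ℕ} {w : List ℕ} {B : Finset ℕ} (h : IsPQR n (w, B)) {b : ℕ} (hb : b ∈ B) :
    b + 1 < n := (h.2.2 b hb).1

lemma pqr_finite (n : ℕ) : Finite {p : List ℕ × Finset ℕ // IsPQR n p} := by
  let f : {p : List ℕ × Finset ℕ // IsPQR n p} → (Fin n → Fin (n + 1)) × (Fin n → Bool) :=
    fun p => (fun i => ⟨p.1.1.getD i 0, by
      rcases p.2 with ⟨_, hlen, _⟩
      have := (isPQR_iff n p.1.1 p.1.2).mp p.2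
      have h2 := this.2.2.1 i i.2
      omega⟩, fun i => decide ((i : ℕ) ∈ p.1.2))
  have hf : Function.Injective f := by
    rintro ⟨⟨w1, B1⟩, h1⟩ ⟨⟨w2, B2⟩, h2⟩ heq
    rw [isPQR_iff] at h1 h2
    simp only [f, Prod.mk.injEq] at heq
    obtain ⟨he1, he2⟩ := heq
    have hw : w1 = w2 := by
      apply List.ext_getElem (by omega)
      intro i hi1 hi2
      have := congrFun he1 ⟨i, by omega⟩
      simp only [Fin.mk.injEq] at this
      rwa [List.getD_eq_getElem w1 0 hi1, List.getD_eq_getElem w2 0 hi2] at this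
    have hB : B1 = B2 := by
      ext b
      by_cases hbn : b < n
      · have := congrFun he2 ⟨b, hbn⟩
        simpa using this
      · constructor
        · intro hb; exact absurd (h1.2.2.2 b hb).1 (by omega)
        · intro hb; exact absurd (h2.2.2.2 b hb).1 (by omega)
    simp [hw, hB]
  exact Finite.of_injective f hf

lemma card_pqr_zero : Nat.card {p : List ℕ × Finset ℕ // IsPQR 0 p} = 1 := by
  rw [Nat.card_eq_one_iff_unique]
  refine ⟨⟨fun a b => ?_⟩, ?_⟩
  · revert a b
    rintro ⟨⟨w1, B1⟩, h1⟩ ⟨⟨w2, B2⟩, h2⟩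
    have hw1 : w1 = [] := List.length_eq_zero_iff.mp h1.2.1
    have hw2 : w2 = [] := List.length_eq_zero_iff.mp h2.2.1
    have hB1 : B1 = ∅ := by
      ext b; simp only [Finset.notMem_empty, iff_false]
      intro hb; exact absurd (h1.2.2 b hb).1 (by omega)
    have hB2 : B2 = ∅ := by
      ext b; simp only [Finset.notMem_empty, iff_false]
      intro hb; exact absurd (h2.2.2 b hb).1 (by omega)
    simp [hw1, hw2, hB1, hB2]
  · exact ⟨⟨([], ∅), ⟨⟨List.Pairwise.nil, by simp⟩, rfl, by simp⟩⟩⟩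

/-- ext for lists via getD -/
lemma ext_getD {w w' : List ℕ} (h : w.length = w'.length)
    (he : ∀ t, t < w.length → w.getD t 0 = w'.getD t 0) : w = w' := by
  apply List.ext_getElem h
  intro t h1 h2
  have := he t h1
  rwa [List.getD_eq_getElem w 0 h1, List.getD_eq_getElem w' 0 h2] at this

def mkw (j : ℕ) (u v : List ℕ) : List ℕ := (1 :: u) ++ v.map (· + j)

def mkB (j : ℕ) (c : Bool) (Bu Bv : Finset ℕ) : Finset ℕ :=
  (Bu.image (· + 1) ∪ (if c then {j - 1} else ∅)) ∪ Bv.image (· + j)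

lemma mkw_length {j : ℕ} {u : List ℕ} (v : List ℕ) (hu : u.length = j - 1) (hj : 1 ≤ j) :
    (mkw j u v).length = j + v.length := by
  simp [mkw, hu]; omega

lemma mkw_getD {j : ℕ} {u : List ℕ} (v : List ℕ) (hu : u.length = j - 1) (hj : 1 ≤ j)
    {t : ℕ} (ht : t < j + v.length) :
    (mkw j u v).getD t 0 =
      if t = 0 then 1 else if t < j then u.getD (t - 1) 0 else v.getD (t - j) 0 + j := by
  have hl : (mkw j u v).length = j + v.length := mkw_length v hu hj
  rw [List.getD_eq_getElem _ 0 (by omega)]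
  rcases Nat.eq_zero_or_pos t with rfl | htpos
  · simp [mkw]
  · by_cases htj : t < j
    · rw [if_neg (by omega), if_pos htj]
      simp only [mkw]
      rw [List.getElem_append_left (by simp; omega), List.getElem_cons]
      rw [dif_neg (by omega), List.getD_eq_getElem u 0 (by omega)]
    · rw [if_neg (by omega), if_neg htj]
      simp only [mkw]
      rw [List.getElem_append_right (by simp; omega), List.getElem_map,
        List.getD_eq_getElem v 0 (by omega)]
      congr 2
      simp only [List.length_cons]
      omega

def fretP (n : ℕ) (w : List ℕ) (t : ℕ) : Prop := t = n ∨ (0 < t ∧ t < n ∧ w.getD t 0 = t + 1)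

instance (n : ℕ) (w : List ℕ) : DecidablePred (fretP n w) := by
  intro t; unfold fretP; infer_instance

lemma fretP_ex (n : ℕ) (w : List ℕ) : ∃ t, fretP n w t := ⟨n, Or.inl rfl⟩

def fret (n : ℕ) (w : List ℕ) : ℕ := Nat.find (fretP_ex n w)

lemma fret_le (n : ℕ) (w : List ℕ) : fret n w ≤ n := Nat.find_le (Or.inl rfl)

lemma fret_pos {n : ℕ} (hn : 0 < n) (w : List ℕ) : 0 < fret n w := by
  rcases Nat.eq_zero_or_pos (fret n w) with h | h
  · have := Nat.find_spec (fretP_ex n w)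
    rw [show Nat.find (fretP_ex n w) = fret n w from rfl, h] at this
    rcases this with h' | h' <;> omega
  · exact h

lemma fret_spec (n : ℕ) (w : List ℕ) :
    fret n w = n ∨ (fret n w < n ∧ w.getD (fret n w) 0 = fret n w + 1) := by
  have := Nat.find_spec (fretP_ex n w)
  rcases this with h | h
  · exact Or.inl h
  · exact Or.inr ⟨h.2.1, h.2.2⟩

lemma fret_min {n : ℕ} {w : List ℕ} {t : ℕ} (h0 : 0 < t) (ht : t < fret n w) :
    w.getD t 0 ≠ t + 1 := by
  have := Nat.find_min (fretP_ex n w) ht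
  unfold fretP at this
  push_neg at this
  have htn : t ≠ n := by have := fret_le n w; omega
  have hlt : t < n := by have := fret_le n w; omega
  exact this.2 h0 hlt

lemma fret_mkw {n j : ℕ} {u v : List ℕ} (hu : u.length = j - 1) (hj : 1 ≤ j)
    (hn : j + v.length = n)
    (hub : ∀ s, s < j - 1 → u.getD s 0 ≤ s + 1)
    (hv1 : v ≠ [] → v.getD 0 0 = 1) :
    fret n (mkw j u v) = j := by
  apply le_antisymm
  · apply Nat.find_le
    rcases Nat.eq_or_lt_of_le (show j ≤ n by omega) with h | h
    · exact Or.inl h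
    · right
      refine ⟨by omega, h, ?_⟩
      have hvne : v ≠ [] := by
        intro hc; rw [hc] at hn; simp at hn; omega
      rw [mkw_getD v hu hj (by omega), if_neg (by omega), if_neg (by omega),
        Nat.sub_self, hv1 hvne]
      omega
  · rw [fret, Nat.le_find_iff]
    intro t htj
    unfold fretP
    push_neg
    refine ⟨by omega, fun h0 _ => ?_⟩
    rw [mkw_getD v hu hj (by omega), if_neg (by omega), if_pos htj]
    have := hub (t - 1) (by omega)
    omega

lemma mkw_isPQR {n j : ℕ} {u v : List ℕ} {Bu Bv : Finset ℕ} {c : Bool}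
    (hj : 1 ≤ j) (hjn : j ≤ n) (hu : IsPQR (j - 1) (u, Bu)) (hv : IsPQR (n - j) (v, Bv))
    (hc : c = true → j < n) :
    IsPQR n (mkw j u v, mkB j c Bu Bv) := by
  rw [isPQR_iff] at hu hv ⊢
  obtain ⟨hul, hus, hub, hubar⟩ := hu
  obtain ⟨hvl, hvs, hvb, hvbar⟩ := hv
  have hn : j + v.length = n := by omega
  have hW0 : (mkw j u v).getD 0 0 = 1 := by
    rw [mkw_getD v hul hj (by omega), if_pos rfl]
  have hWu : ∀ t, 0 < t → t < j → (mkw j u v).getD t 0 = u.getD (t - 1) 0 := by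
    intro t h1 h2
    rw [mkw_getD v hul hj (by omega), if_neg (by omega), if_pos h2]
  have hWv : ∀ t, j ≤ t → t < n → (mkw j u v).getD t 0 = v.getD (t - j) 0 + j := by
    intro t h1 h2
    rw [mkw_getD v hul hj (by omega), if_neg (by omega), if_neg (by omega)]
  refine ⟨by rw [mkw_length v hul hj]; omega, ?_, ?_, ?_⟩
  · intro i k hik hk
    rcases Nat.eq_zero_or_pos i with rfl | hi
    · rcases Nat.eq_zero_or_pos k with rfl | hk0
      · exact le_refl _
      · by_cases hkj : k < j
        · rw [hW0, hWu k hk0 hkj]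
          exact (hub (k - 1) (by omega)).1
        · rw [hW0, hWv k (by omega) hk]
          omega
    · by_cases hkj : k < j
      · rw [hWu i hi (by omega), hWu k (by omega) hkj]
        exact hus (i - 1) (k - 1) (by omega) (by omega)
      · rw [hWv k (by omega) hk]
        by_cases hij : i < j
        · rw [hWu i hi hij]
          have h1 := (hub (i - 1) (by omega)).2
          have h2 := (hvb (k - j) (by omega)).1
          omega
        · rw [hWv i (by omega) (by omega)]
          have := hvs (i - j) (k - j) (by omega) (by omega)
          omega
  · intro i hi
    rcases Nat.eq_zero_or_pos i with rfl | hi0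
    · rw [hW0]; omega
    · by_cases hij : i < j
      · rw [hWu i hi0 hij]
        have := hub (i - 1) (by omega)
        omega
      · rw [hWv i (by omega) hi]
        have := hvb (i - j) (by omega)
        omega
  · intro b hb
    simp only [mkB, Finset.mem_union, Finset.mem_image] at hb
    rcases hb with (⟨x, hx, rfl⟩ | hjb) | ⟨x, hx, rfl⟩
    · have hxb := hubar x hx
      have hx2 : x + 1 + 1 < j := by omega
      refine ⟨by omega, ?_⟩
      rw [hWu (x + 1) (by omega) (by omega), hWu (x + 1 + 1) (by omega) (by omega)]
      have h1 : x + 1 - 1 = x := by omega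
      have h2 : x + 1 + 1 - 1 = x + 1 := by omega
      rw [h1, h2]
      exact hxb.2
    · have hcc : c = true := by
        by_contra hcf
        simp [hcf] at hjb
      have hjn' : j < n := hc hcc
      have hbj : b = j - 1 := by
        rw [if_pos hcc] at hjb
        simpa using hjb
      subst hbj
      have hvne : 0 < v.length := by omega
      refine ⟨by omega, ?_⟩
      rw [show j - 1 + 1 = j by omega, hWv j (le_refl j) hjn', Nat.sub_self]
      have hv0 : 1 ≤ v.getD 0 0 := (hvb 0 (by omega)).1
      rcases Nat.eq_zero_or_pos (j - 1) with h1 | h1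
      · rw [h1, hW0]; omega
      · rw [hWu (j - 1) h1 (by omega)]
        have := (hub (j - 1 - 1) (by omega)).2
        omega
    · have hxb := hvbar x hx
      refine ⟨by omega, ?_⟩
      rw [hWv (x + j) (by omega) (by omega), hWv (x + j + 1) (by omega) (by omega)]
      have h1 : x + j - j = x := by omega
      have h2 : x + j + 1 - j = x + 1 := by omega
      rw [h1, h2]
      have := hxb.2
      omega

lemma mkB_rec_Bu {j : ℕ} {Bu Bv : Finset ℕ} {c : Bool} (hj : 1 ≤ j)
    (hBu : ∀ b ∈ Bu, b + 1 < j - 1) :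
    ((mkB j c Bu Bv).filter (fun b => b + 1 < j)).image (· - 1) = Bu := by
  ext z
  simp only [Finset.mem_image, Finset.mem_filter, mkB, Finset.mem_union]
  constructor
  · rintro ⟨y, ⟨hy, hyj⟩, rfl⟩
    rcases hy with (⟨x, hx, rfl⟩ | hy) | ⟨x, hx, rfl⟩
    · simpa using hx
    · exfalso
      rcases c with _ | _
      · simp at hy
      · simp at hy; omega
    · omega
  · intro hz
    exact ⟨z + 1, ⟨Or.inl (Or.inl ⟨z, hz, rfl⟩), by have := hBu z hz; omega⟩, by omega⟩

lemma mkB_rec_c {j : ℕ} {Bu Bv : Finset ℕ} {c : Bool} (hj : 1 ≤ j)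
    (hBu : ∀ b ∈ Bu, b + 1 < j - 1) :
    ((j - 1) ∈ mkB j c Bu Bv) ↔ c = true := by
  cases c with
  | true =>
    simp only [mkB, if_pos rfl, Finset.mem_union, Finset.mem_singleton]
    tauto
  | false =>
    simp only [mkB, Finset.mem_union, Finset.mem_image, if_neg (by simp : ¬(false = true))]
    constructor
    · rintro ((⟨x, hx, hxe⟩ | hy) | ⟨x, hx, hxe⟩)
      · have := hBu x hx; omega
      · simp at hy
      · omega
    · simp

lemma mkB_rec_Bv {j : ℕ} {Bu Bv : Finset ℕ} {c : Bool} (hj : 1 ≤ j)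
    (hBu : ∀ b ∈ Bu, b + 1 < j - 1) :
    ((mkB j c Bu Bv).filter (fun b => j ≤ b)).image (· - j) = Bv := by
  ext z
  simp only [Finset.mem_image, Finset.mem_filter, mkB, Finset.mem_union]
  constructor
  · rintro ⟨y, ⟨hy, hyj⟩, rfl⟩
    rcases hy with (⟨x, hx, rfl⟩ | hy) | ⟨x, hx, rfl⟩
    · have := hBu x hx; omega
    · exfalso
      rcases c with _ | _
      · simp at hy
      · simp at hy; omega
    · simpa using hx
  · intro hz
    exact ⟨z + j, ⟨Or.inr ⟨z, hz, rfl⟩, by omega⟩, by omega⟩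

-- now the decomposition. Context: a PQR (w, B) of length n, with 1 ≤ j ≤ n,
-- hsmall : entries before j are small, hret : w j = j+1 if j < n.
section Decomp
variable {n j : ℕ} {w : List ℕ} {B : Finset ℕ}

def du (j : ℕ) (w : List ℕ) : List ℕ := (w.take j).tail
def dv (j : ℕ) (w : List ℕ) : List ℕ := (w.drop j).map (· - j)
def dBu (j : ℕ) (B : Finset ℕ) : Finset ℕ := (B.filter (fun b => b + 1 < j)).image (· - 1)
def dBv (j : ℕ) (B : Finset ℕ) : Finset ℕ := (B.filter (fun b => j ≤ b)).image (· - j)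

variable (hw : IsPQR n (w, B)) (hj : 1 ≤ j) (hjn : j ≤ n)
  (hsmall : ∀ t, 0 < t → t < j → w.getD t 0 ≤ t)
  (hret : j < n → w.getD j 0 = j + 1)

include hw hj hjn

lemma du_length : (du j w).length = j - 1 := by
  have hl := ((isPQR_iff n w B).mp hw).1
  simp [du, List.length_tail, List.length_take]
  omega

lemma du_getD {s : ℕ} (hs : s < j - 1) : (du j w).getD s 0 = w.getD (s + 1) 0 := by
  have hl := ((isPQR_iff n w B).mp hw).1
  have h1 : s < (du j w).length := by rw [du_length hw hj hjn]; omega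
  rw [List.getD_eq_getElem _ 0 h1, List.getD_eq_getElem w 0 (by omega)]
  simp only [du]
  rw [List.getElem_tail, List.getElem_take]

lemma dv_length : (dv j w).length = n - j := by
  have hl := ((isPQR_iff n w B).mp hw).1
  simp [dv]
  omega

lemma dv_getD {s : ℕ} (hs : s < n - j) : (dv j w).getD s 0 = w.getD (j + s) 0 - j := by
  have hl := ((isPQR_iff n w B).mp hw).1
  have h1 : s < (dv j w).length := by rw [dv_length hw hj hjn]; omega
  rw [List.getD_eq_getElem _ 0 h1, List.getD_eq_getElem w 0 (by omega)]
  simp only [dv]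
  rw [List.getElem_map, List.getElem_drop]

include hsmall

lemma hB1 : ∀ x ∈ B, x + 1 < j → 1 ≤ x := by
  obtain ⟨hl, hs, hb, hbar⟩ := (isPQR_iff n w B).mp hw
  intro x hx hxj
  by_contra hx0
  have hx0' : x = 0 := by omega
  subst hx0'
  have h1 : w.getD 0 0 < w.getD 1 0 := by simpa using (hbar 0 hx).2
  have h2 := hb 0 (by omega)
  have h3 := hsmall 1 (by omega) (by omega)
  omega

lemma du_isPQR : IsPQR (j - 1) (du j w, dBu j B) := by
  obtain ⟨hl, hs, hb, hbar⟩ := (isPQR_iff n w B).mp hw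
  rw [isPQR_iff]
  refine ⟨du_length hw hj hjn, ?_, ?_, ?_⟩
  · intro i k hik hk
    rw [du_getD hw hj hjn (by omega), du_getD hw hj hjn hk]
    exact hs (i + 1) (k + 1) (by omega) (by omega)
  · intro i hi
    rw [du_getD hw hj hjn hi]
    have h1 := (hb (i + 1) (by omega)).1
    have h2 := hsmall (i + 1) (by omega) (by omega)
    omega
  · intro b hbm
    simp only [dBu, Finset.mem_image, Finset.mem_filter] at hbm
    obtain ⟨x, ⟨hx, hxj⟩, rfl⟩ := hbm
    have hx1 : 1 ≤ x := hB1 hw hj hjn hsmall x hx hxj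
    have hxbar := hbar x hx
    refine ⟨by omega, ?_⟩
    rw [du_getD hw hj hjn (by omega), du_getD hw hj hjn (by omega)]
    have e1 : x - 1 + 1 = x := by omega
    rw [e1]
    exact hxbar.2

include hret

lemma dv_isPQR : IsPQR (n - j) (dv j w, dBv j B) := by
  obtain ⟨hl, hs, hb, hbar⟩ := (isPQR_iff n w B).mp hw
  rw [isPQR_iff]
  have hwj : ∀ t, j ≤ t → t < n → j + 1 ≤ w.getD t 0 := by
    intro t h1 h2
    have := hs j t h1 h2
    rw [hret (by omega)] at this
    omega
  refine ⟨dv_length hw hj hjn, ?_, ?_, ?_⟩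
  · intro i k hik hk
    rw [dv_getD hw hj hjn (by omega), dv_getD hw hj hjn hk]
    have := hs (j + i) (j + k) (by omega) (by omega)
    omega
  · intro i hi
    rw [dv_getD hw hj hjn hi]
    have h1 := (hb (j + i) (by omega)).2
    have h2 := hwj (j + i) (by omega) (by omega)
    omega
  · intro b hbm
    simp only [dBv, Finset.mem_image, Finset.mem_filter] at hbm
    obtain ⟨x, ⟨hx, hxj⟩, rfl⟩ := hbm
    have hxbar := hbar x hx
    refine ⟨by omega, ?_⟩
    rw [dv_getD hw hj hjn (by omega), dv_getD hw hj hjn (by omega)]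
    have e1 : j + (x - j) = x := by omega
    have e2 : j + (x - j + 1) = x + 1 := by omega
    rw [e1, e2]
    have h2 := hwj x (by omega) (by omega)
    have := hxbar.2
    omega

lemma mkw_du_dv : mkw j (du j w) (dv j w) = w := by
  obtain ⟨hl, hs, hb, hbar⟩ := (isPQR_iff n w B).mp hw
  have hul := du_length hw hj hjn
  have hvl := dv_length hw hj hjn
  have hwj : ∀ t, j ≤ t → t < n → j + 1 ≤ w.getD t 0 := by
    intro t h1 h2
    have := hs j t h1 h2
    rw [hret (by omega)] at this
    omega
  apply ext_getD
  · rw [mkw_length (dv j w) hul hj, hvl, hl]; omega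
  · intro t ht
    rw [mkw_length (dv j w) hul hj, hvl] at ht
    rw [mkw_getD (dv j w) hul hj (by omega)]
    rcases Nat.eq_zero_or_pos t with rfl | ht0
    · rw [if_pos rfl]
      have := hb 0 (by omega)
      omega
    · rw [if_neg (by omega)]
      by_cases htj : t < j
      · rw [if_pos htj, du_getD hw hj hjn (by omega)]
        congr 1
        omega
      · rw [if_neg htj, dv_getD hw hj hjn (by omega)]
        have e1 : j + (t - j) = t := by omega
        rw [e1]
        have := hwj t (by omega) (by omega)
        omega

lemma mkB_du_dv : mkB j (decide ((j - 1) ∈ B)) (dBu j B) (dBv j B) = B := by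
  obtain ⟨hl, hs, hb, hbar⟩ := (isPQR_iff n w B).mp hw
  ext b
  simp only [mkB, Finset.mem_union, Finset.mem_image, dBu, dBv, Finset.mem_filter]
  constructor
  · rintro ((⟨x, hx, rfl⟩ | hy) | ⟨x, hx, rfl⟩)
    · obtain ⟨x', ⟨hx', hx'j⟩, rfl⟩ := hx
      have : 1 ≤ x' := hB1 hw hj hjn hsmall x' hx' hx'j
      have e : x' - 1 + 1 = x' := by omega
      rwa [e]
    · by_cases hc : (j - 1) ∈ B
      · rw [if_pos (by simpa using hc)] at hy
        simp only [Finset.mem_singleton] at hy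
        subst hy
        exact hc
      · rw [if_neg (by simpa using hc)] at hy
        simp at hy
    · obtain ⟨x', ⟨hx', hx'j⟩, rfl⟩ := hx
      have e : x' - j + j = x' := by omega
      rwa [e]
  · intro hbB
    by_cases h1 : b + 1 < j
    · exact Or.inl (Or.inl ⟨b - 1, ⟨b, ⟨hbB, h1⟩, rfl⟩,
        by have := hB1 hw hj hjn hsmall b hbB h1; omega⟩)
    · by_cases h2 : j ≤ b
      · exact Or.inr ⟨b - j, ⟨b, ⟨hbB, h2⟩, rfl⟩, by omega⟩
      · have hbe : b = j - 1 := by omega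
        subst hbe
        left; right
        rw [if_pos (by simpa using hbB)]
        simp

end Decomp

end PQRaux
namespace PQRaux

abbrev PQRT (n : ℕ) := {p : List ℕ × Finset ℕ // IsPQR n p}

instance pqr_finite' (n : ℕ) : Finite (PQRT n) := pqr_finite n

abbrev SS (m : ℕ) : Type :=
  (Σ i : Fin m, PQRT i × Bool × PQRT (m - i)) ⊕ PQRT m

lemma isPQR_nil : IsPQR 0 ([], (∅ : Finset ℕ)) := ⟨⟨List.Pairwise.nil, by simp⟩, rfl, by simp⟩

lemma hu_of {k : ℕ} (u : PQRT k) : IsPQR (k + 1 - 1) (u.1.1, u.1.2) := by simpa using u.2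

lemma len_of {k : ℕ} (u : PQRT k) : u.1.1.length = k :=
  ((isPQR_iff k u.1.1 u.1.2).mp (by simpa using u.2)).1

lemma bars_small {n : ℕ} {u : List ℕ} {Bu : Finset ℕ} (hu : IsPQR n (u, Bu)) :
    ∀ b ∈ Bu, b + 1 < n := fun b hb => (((isPQR_iff _ _ _).mp hu).2.2.2 b hb).1

def toFun (m : ℕ) : SS m → PQRT (m + 1)
  | Sum.inl ⟨i, u, c, v⟩ =>
    ⟨(mkw (i + 1) u.1.1 v.1.1, mkB (i + 1) c u.1.2 v.1.2), by
      apply mkw_isPQR (by omega) (by omega) (hu_of u)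
      · rw [show m + 1 - ((i : ℕ) + 1) = m - (i : ℕ) from by omega]
        simpa using v.2
      · intro _
        have := i.isLt
        omega⟩
  | Sum.inr u =>
    ⟨(mkw (m + 1) u.1.1 [], mkB (m + 1) false u.1.2 ∅), by
      apply mkw_isPQR (by omega) (le_refl _) (hu_of u)
      · rw [Nat.sub_self]
        exact isPQR_nil
      · simp⟩

lemma fret_parts {n j : ℕ} {u v : List ℕ} {Bu Bv : Finset ℕ} (hj : 1 ≤ j) (hjn : j ≤ n)
    (hu : IsPQR (j - 1) (u, Bu)) (hv : IsPQR (n - j) (v, Bv)) :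
    fret n (mkw j u v) = j := by
  obtain ⟨hul, hus, hub, hubar⟩ := (isPQR_iff _ _ _).mp hu
  obtain ⟨hvl, hvs, hvb, hvbar⟩ := (isPQR_iff _ _ _).mp hv
  apply fret_mkw hul hj (by omega)
  · intro s hs
    exact (hub s (by omega)).2
  · intro hvne
    have h0 : 0 < v.length := List.length_pos_iff.mpr hvne
    have := hvb 0 (by omega)
    omega

lemma fret_toFun_inl {m : ℕ} (i : Fin m) (u : PQRT i) (c : Bool) (v : PQRT (m - i)) :
    fret (m + 1) (mkw ((i : ℕ) + 1) u.1.1 v.1.1) = (i : ℕ) + 1 := by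
  apply fret_parts (by omega) (by have := i.isLt; omega) (hu_of u)
  rw [show m + 1 - ((i : ℕ) + 1) = m - (i : ℕ) from by omega]
  simpa using v.2

lemma fret_toFun_inr {m : ℕ} (u : PQRT m) :
    fret (m + 1) (mkw (m + 1) u.1.1 []) = m + 1 := by
  apply fret_parts (by omega) (le_refl _) (hu_of u)
  rw [Nat.sub_self]
  exact isPQR_nil

lemma toFun_inj (m : ℕ) : Function.Injective (toFun m) := by
  have hadd : ∀ j : ℕ, Function.Injective (fun x : ℕ => x + j) := fun j a b h => by
    simpa using h
  rintro (⟨i, u, c, v⟩ | u) (⟨i', u', c', v'⟩ | u') hxy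
  · have hw := congrArg (fun p => p.1.1) hxy
    have hB := congrArg (fun p => p.1.2) hxy
    simp only [toFun] at hw hB
    have hi : (i : ℕ) = (i' : ℕ) := by
      have f1 := fret_toFun_inl i u c v
      have f2 := fret_toFun_inl i' u' c' v'
      rw [hw] at f1
      rw [f2] at f1
      omega
    have hIfin : i = i' := Fin.ext hi
    subst hIfin
    have hBu_small : ∀ b ∈ u.1.2, b + 1 < (i : ℕ) + 1 - 1 := by
      intro b hb
      have := bars_small u.2 b hb
      omega
    have hBu_small' : ∀ b ∈ u'.1.2, b + 1 < (i : ℕ) + 1 - 1 := by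
      intro b hb
      have := bars_small u'.2 b hb
      omega
    simp only [mkw] at hw
    obtain ⟨hcons, hmap⟩ := List.append_inj hw (by simp [len_of u, len_of u'])
    have hu1 : u.1.1 = u'.1.1 := by injection hcons
    have hv1 : v.1.1 = v'.1.1 := List.map_injective_iff.mpr (hadd ((i : ℕ) + 1)) hmap
    have hBu : u.1.2 = u'.1.2 := by
      have h1 := mkB_rec_Bu (c := c) (Bv := v.1.2) (by omega) hBu_small
      have h2 := mkB_rec_Bu (c := c') (Bv := v'.1.2) (by omega) hBu_small'
      rw [← h1, ← h2, hB]
    have hcc : c = c' := by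
      have h1 := mkB_rec_c (c := c) (Bv := v.1.2) (by omega : 1 ≤ (i : ℕ) + 1) hBu_small
      have h2 := mkB_rec_c (c := c') (Bv := v'.1.2) (by omega : 1 ≤ (i : ℕ) + 1) hBu_small'
      rw [hB, h2] at h1
      cases c <;> cases c' <;> simp_all
    have hBv : v.1.2 = v'.1.2 := by
      have h1 := mkB_rec_Bv (c := c) (Bv := v.1.2) (by omega) hBu_small
      have h2 := mkB_rec_Bv (c := c') (Bv := v'.1.2) (by omega) hBu_small'
      rw [← h1, ← h2, hB]
    have hu : u = u' := Subtype.ext (Prod.ext_iff.mpr ⟨hu1, hBu⟩)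
    have hv : v = v' := Subtype.ext (Prod.ext_iff.mpr ⟨hv1, hBv⟩)
    rw [hu, hv, hcc]
  · exfalso
    have hw := congrArg (fun p => p.1.1) hxy
    simp only [toFun] at hw
    have f1 := fret_toFun_inl i u c v
    have f2 := fret_toFun_inr u'
    rw [hw, f2] at f1
    have := i.isLt
    omega
  · exfalso
    have hw := congrArg (fun p => p.1.1) hxy
    simp only [toFun] at hw
    have f1 := fret_toFun_inr u
    have f2 := fret_toFun_inl i' u' c' v'
    rw [hw, f2] at f1
    have := i'.isLt
    omega
  · have hw := congrArg (fun p => p.1.1) hxy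
    have hB := congrArg (fun p => p.1.2) hxy
    simp only [toFun] at hw hB
    have hBu_small : ∀ b ∈ u.1.2, b + 1 < m + 1 - 1 := by
      intro b hb
      have := bars_small u.2 b hb
      omega
    have hBu_small' : ∀ b ∈ u'.1.2, b + 1 < m + 1 - 1 := by
      intro b hb
      have := bars_small u'.2 b hb
      omega
    simp only [mkw, List.map_nil, List.append_nil, List.cons.injEq, true_and] at hw
    have hBu : u.1.2 = u'.1.2 := by
      have h1 := mkB_rec_Bu (c := false) (Bv := (∅ : Finset ℕ)) (by omega) hBu_small
      have h2 := mkB_rec_Bu (c := false) (Bv := (∅ : Finset ℕ)) (by omega) hBu_small'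
      rw [← h1, ← h2, hB]
    have hu : u = u' := Subtype.ext (Prod.ext_iff.mpr ⟨hw, hBu⟩)
    rw [hu]

lemma toFun_surj (m : ℕ) : Function.Surjective (toFun m) := by
  rintro ⟨⟨w, B⟩, h⟩
  obtain ⟨F, hF⟩ : ∃ F, fret (m + 1) w = F := ⟨_, rfl⟩
  have hpos : 1 ≤ F := hF ▸ fret_pos (by omega) w
  have hle : F ≤ m + 1 := hF ▸ fret_le (m + 1) w
  obtain ⟨hl, hs, hb, hbar⟩ := (isPQR_iff (m + 1) w B).mp h
  have hsmall : ∀ t, 0 < t → t < F → w.getD t 0 ≤ t := by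
    intro t h0 htj
    have h1 := fret_min h0 (hF ▸ htj)
    have h2 := (hb t (by omega)).2
    omega
  have hret : F < m + 1 → w.getD F 0 = F + 1 := by
    intro hlt
    have := ((fret_spec (m + 1) w).resolve_left (by omega)).2
    rwa [hF] at this
  by_cases hcase : F = m + 1
  · refine ⟨Sum.inr ⟨(du F w, dBu F B), ?_⟩, ?_⟩
    · have := du_isPQR h hpos hle hsmall
      rw [show m = F - 1 from by omega]
      exact this
    · apply Subtype.ext
      simp only [toFun]
      have hdv : dv F w = [] := by
        apply List.length_eq_zero_iff.mp
        rw [dv_length h hpos hle]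
        omega
      have hdBv : dBv F B = ∅ := by
        ext b
        simp only [dBv, Finset.mem_image, Finset.mem_filter, Finset.notMem_empty, iff_false]
        rintro ⟨x, ⟨hx, hxj⟩, rfl⟩
        have := (hbar x hx).1
        omega
      have hdec : decide ((F - 1) ∈ B) = false := by
        apply decide_eq_false
        intro hmem
        have := (hbar _ hmem).1
        omega
      have key := mkB_du_dv h hpos hle hsmall hret
      rw [hdec, hdBv] at key
      refine Prod.ext_iff.mpr ⟨?_, ?_⟩
      · rw [show m + 1 = F from by omega, ← hdv]
        exact mkw_du_dv h hpos hle hsmall hret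
      · rw [show m + 1 = F from by omega]
        exact key
  · have hlt : F < m + 1 := by omega
    refine ⟨Sum.inl ⟨⟨F - 1, by omega⟩,
      ⟨(du F w, dBu F B), du_isPQR h hpos hle hsmall⟩,
      decide ((F - 1) ∈ B),
      ⟨(dv F w, dBv F B), ?_⟩⟩, ?_⟩
    · rw [show m - (F - 1) = m + 1 - F from by omega]
      exact dv_isPQR h hpos hle hsmall hret
    · apply Subtype.ext
      simp only [toFun]
      refine Prod.ext_iff.mpr ⟨?_, ?_⟩
      · rw [show F - 1 + 1 = F from by omega]
        exact mkw_du_dv h hpos hle hsmall hret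
      · rw [show F - 1 + 1 = F from by omega]
        exact mkB_du_dv h hpos hle hsmall hret

lemma nat_card_sigma {m : ℕ} (G : Fin m → Type) [∀ i, Finite (G i)] :
    Nat.card (Σ i, G i) = ∑ i, Nat.card (G i) := by
  letI : ∀ i, Fintype (G i) := fun i => Fintype.ofFinite _
  rw [Nat.card_eq_fintype_card, Fintype.card_sigma]
  exact Finset.sum_congr rfl fun i _ => (Nat.card_eq_fintype_card).symm

lemma card_pqr : ∀ n, Nat.card (PQRT n) = aFun n := by
  intro n
  induction n using Nat.strong_induction_on with
  | _ n IH =>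
    match n with
    | 0 =>
      rw [card_pqr_zero]
      simp [aFun]
    | (m + 1) =>
      have hbij : Function.Bijective (toFun m) := ⟨toFun_inj m, toFun_surj m⟩
      rw [← Nat.card_congr (Equiv.ofBijective _ hbij)]
      rw [Nat.card_sum, nat_card_sigma]
      have hterm : ∀ i : Fin m, Nat.card (PQRT (i : ℕ) × Bool × PQRT (m - (i : ℕ)))
          = aFun i * (2 * aFun (m - i)) := by
        intro i
        rw [Nat.card_prod, Nat.card_prod, Nat.card_eq_fintype_card (α := Bool)]
        rw [IH i (by have := i.isLt; omega), IH (m - i) (by omega)]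
        simp [Fintype.card_bool]
      rw [Finset.sum_congr rfl (fun i _ => hterm i)]
      rw [Fin.sum_univ_eq_sum_range (fun i => aFun i * (2 * aFun (m - i)))]
      rw [IH m (by omega)]
      rw [aFun_succ]
      have : ∑ i ∈ Finset.range m, aFun i * (2 * aFun (m - i))
          = 2 * ∑ i ∈ Finset.range m, aFun i * aFun (m - i) := by
        rw [Finset.mul_sum]
        exact Finset.sum_congr rfl fun i _ => by ring
      omega

end PQRaux
namespace PQRaux

lemma aFun_zero : aFun 0 = 1 := by simp [aFun]

lemma aFun_one : aFun 1 = 1 := by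
  rw [show (1:ℕ) = 0 + 1 from rfl, aFun_succ]
  simp [aFun_zero]

lemma aFun_rec2 (k : ℕ) :
    aFun (k + 2) = 3 * aFun (k + 1) + 2 * ∑ i ∈ Finset.range k, aFun (i + 1) * aFun (k - i) := by
  rw [show k + 2 = (k + 1) + 1 from rfl, aFun_succ (k + 1), Finset.sum_range_succ']
  have h1 : ∀ i ∈ Finset.range k, aFun (i + 1) * aFun (k + 1 - (i + 1)) = aFun (i + 1) * aFun (k - i) :=
    fun i hi => by rw [show k + 1 - (i + 1) = k - i from by omega]
  rw [Finset.sum_congr rfl h1, aFun_zero, Nat.sub_zero, one_mul]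
  ring

open PowerSeries in
lemma coeff_S (S : PowerSeries ℚ)
    (heq : S = 1 + 3 * PowerSeries.X * S + 2 * PowerSeries.X ^ 2 * S ^ 2) :
    ∀ n, PowerSeries.coeff n S = (aFun (n + 1) : ℚ) := by
  intro n
  induction n using Nat.strong_induction_on with
  | _ n IH =>
    have e3 : (3 * X * S : PowerSeries ℚ) = X * (3 * S) := by ring
    have e2 : (2 * X ^ 2 * S ^ 2 : PowerSeries ℚ) = X * (X * (2 * (S * S))) := by ring
    have hC3 : (3 : PowerSeries ℚ) = C (R := ℚ) (3 : ℚ) := (map_ofNat (C (R := ℚ)) 3).symm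
    have hC2 : (2 : PowerSeries ℚ) = C (R := ℚ) (2 : ℚ) := (map_ofNat (C (R := ℚ)) 2).symm
    have hmul3 : ∀ k, coeff k (3 * S) = 3 * coeff k S := fun k => by
      rw [hC3, coeff_C_mul]
    have hmul2 : ∀ k, coeff k (2 * (S * S)) = 2 * coeff k (S * S) := fun k => by
      rw [hC2, coeff_C_mul]
    have hco := congrArg (coeff n) heq
    rw [map_add, map_add, e3, e2, coeff_one] at hco
    match n with
    | 0 =>
      rw [coeff_zero_X_mul, coeff_zero_X_mul, if_pos rfl] at hco
      rw [hco, aFun_one]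
      norm_num
    | 1 =>
      rw [coeff_succ_X_mul, coeff_succ_X_mul, coeff_zero_X_mul, if_neg (by omega)] at hco
      rw [hco, hmul3, IH 0 (by omega), aFun_one]
      rw [show (1:ℕ) + 1 = 1 + 1 from rfl, aFun_succ]
      norm_num [aFun_one, aFun_zero]
    | (k + 2) =>
      rw [coeff_succ_X_mul, coeff_succ_X_mul, coeff_succ_X_mul, if_neg (by omega)] at hco
      rw [hmul3, hmul2, coeff_mul, Finset.Nat.sum_antidiagonal_eq_sum_range_succ_mk] at hco
      have hsum : ∑ i ∈ Finset.range (k + 1), coeff i S * coeff (k - i) S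
          = ∑ i ∈ Finset.range (k + 1), (aFun (i + 1) * aFun (k - i + 1) : ℚ) := by
        refine Finset.sum_congr rfl fun i hi => ?_
        have hik := Finset.mem_range.mp hi
        rw [IH i (by omega), IH (k - i) (by omega)]
      rw [hsum, IH (k + 1) (by omega)] at hco
      rw [hco]
      rw [show k + 2 + 1 = (k + 1) + 2 from by omega, aFun_rec2 (k + 1)]
      have hss : ∑ i ∈ Finset.range (k + 1), (aFun (i + 1) * aFun (k - i + 1) : ℚ)
          = ((∑ i ∈ Finset.range (k + 1), aFun (i + 1) * aFun (k + 1 - i) : ℕ) : ℚ) := by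
        push_cast
        refine Finset.sum_congr rfl fun i hi => ?_
        have hik := Finset.mem_range.mp hi
        rw [show k + 1 - i = k - i + 1 from by omega]
      rw [hss]
      push_cast
      ring

end PQRaux
namespace PQRaux

lemma aFun_two : aFun 2 = 3 := by
  rw [show (2:ℕ) = 1 + 1 from rfl, aFun_succ]
  norm_num [Finset.sum_range_one, aFun_one, aFun_zero]

lemma aFun_three : aFun 3 = 11 := by
  rw [show (3:ℕ) = 2 + 1 from rfl, aFun_succ]
  norm_num [Finset.sum_range_succ, Finset.sum_range_one, aFun_two, aFun_one, aFun_zero]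

end PQRaux

theorem pqr_card_eq_little_schroeder (S : PowerSeries ℚ)
    (heq : S = 1 + 3 * PowerSeries.X * S + 2 * PowerSeries.X ^ 2 * S ^ 2) (n : ℕ) :
    (Nat.card {p : List ℕ × Finset ℕ // IsPQR n p} : ℚ) =
      PowerSeries.coeff n (1 + PowerSeries.X * S) ∧
    Nat.card {p : List ℕ × Finset ℕ // IsPQR 1 p} = 1 ∧
    Nat.card {p : List ℕ × Finset ℕ // IsPQR 2 p} = 3 ∧
    Nat.card {p : List ℕ × Finset ℕ // IsPQR 3 p} = 11 := by
  refine ⟨?_, ?_, ?_, ?_⟩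
  · rw [PQRaux.card_pqr n, map_add, PowerSeries.coeff_one]
    match n with
    | 0 =>
      rw [PowerSeries.coeff_zero_X_mul, if_pos rfl, PQRaux.aFun_zero]
      norm_num
    | (k + 1) =>
      rw [PowerSeries.coeff_succ_X_mul, if_neg (by omega), PQRaux.coeff_S S heq k]
      ring
  · rw [PQRaux.card_pqr 1, PQRaux.aFun_one]
  · rw [PQRaux.card_pqr 2, PQRaux.aFun_two]
  · rw [PQRaux.card_pqr 3, PQRaux.aFun_three]
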